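/- Let A be a skew-symmetric payoff matrix on Fin N whose pure strategies are partitioned into a nonempty set Π_eq and its complement Π_out, and suppose there is r > 0 such that A i ρ ≥ r for every i ∈ Π_eq and ρ ∈ Π_out, while |A i j| < r for all i, j ∈ Π_eq. Assume nondegeneracy: for every nonempty E ⊆ Π_eq, the zero-sum matrix game in which the row player mixes over E and the column player mixes over Π_eq (row payoff given by A) has a unique pair of optimal mixed strategies. If P ⊆ Fin N is a nonempty population with P ∩ Π_eq ≠ ∅, then for every ρ ∈ Π_out we have PE(P ∪ {ρ}) = PE(P). -/

import Mathlib

/-- Payoff of pure strategy `i` against mixed strategy `σ`: `(Aσ) i = ∑ j, A i j * σ j`. -/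
noncomputable def pay {N : ℕ} (A : Fin N → Fin N → ℝ) (σ : Fin N → ℝ) (i : Fin N) : ℝ :=
  ∑ j, A i j * σ j

/-- `max_i (Aσ) i`. -/
noncomputable def maxPay {N : ℕ} (A : Fin N → Fin N → ℝ) (σ : Fin N → ℝ) : ℝ :=
  ⨆ i, pay A σ i

/-- `σ` is a mixed strategy supported inside `P`. -/
def SuppIn {N : ℕ} (P : Set (Fin N)) (σ : Fin N → ℝ) : Prop :=
  σ ∈ stdSimplex ℝ (Fin N) ∧ ∀ j ∉ P, σ j = 0

/-- Population exploitability of a population `P`: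
the least value of `max_i (Aσ) i` over mixed strategies supported in `P`. -/
noncomputable def PE {N : ℕ} (A : Fin N → Fin N → ℝ) (P : Set (Fin N)) : ℝ :=
  sInf (maxPay A '' {σ | SuppIn P σ})

/-- `i` is a best response to `σ`. -/
def IsBR {N : ℕ} (A : Fin N → Fin N → ℝ) (σ : Fin N → ℝ) (i : Fin N) : Prop :=
  pay A σ i = maxPay A σ

/-- Guaranteed payoff of a row mixture `x` against the column strategy set `C`:
`min_{j ∈ C} ∑ i, x i * A i j`. -/
noncomputable def rowGuarantee {N : ℕ} (A : Fin N → Fin N → ℝ) (C : Set (Fin N))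
    (x : Fin N → ℝ) : ℝ :=
  sInf {v | ∃ j ∈ C, v = ∑ i, x i * A i j}

/-- Threat value of a column mixture `y` against the row strategy set `R`:
`max_{i ∈ R} ∑ j, A i j * y j`. -/
noncomputable def colThreat {N : ℕ} (A : Fin N → Fin N → ℝ) (R : Set (Fin N))
    (y : Fin N → ℝ) : ℝ :=
  sSup {v | ∃ i ∈ R, v = ∑ j, A i j * y j}

/-- `(x, y)` is an optimal pair of the zero-sum matrix game with row strategy set `R`,
column strategy set `C` and row payoff `A`: `x` is a maximin row mixture and `y` a
minimax column mixture. -/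
def OptimalPair {N : ℕ} (A : Fin N → Fin N → ℝ) (R C : Set (Fin N))
    (x y : Fin N → ℝ) : Prop :=
  SuppIn R x ∧ SuppIn C y ∧
  (∀ x', SuppIn R x' → rowGuarantee A C x' ≤ rowGuarantee A C x) ∧
  (∀ y', SuppIn C y' → colThreat A R y ≤ colThreat A R y')


section Helpers

variable {N : ℕ}

lemma pay_le_maxPay (A : Fin N → Fin N → ℝ) (σ : Fin N → ℝ) (i : Fin N) :
    pay A σ i ≤ maxPay A σ :=
  le_ciSup (Set.finite_range (pay A σ)).bddAbove i

/-- A convex combination of payoffs is at most the max payoff. -/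
lemma avg_le_maxPay (A : Fin N → Fin N → ℝ) (σ : Fin N → ℝ) {x : Fin N → ℝ}
    (hx : x ∈ stdSimplex ℝ (Fin N)) :
    ∑ i, x i * pay A σ i ≤ maxPay A σ := by
  calc ∑ i, x i * pay A σ i ≤ ∑ i, x i * maxPay A σ := by
        refine Finset.sum_le_sum fun i _ => ?_
        exact mul_le_mul_of_nonneg_left (pay_le_maxPay A σ i) (hx.1 i)
    _ = maxPay A σ := by rw [← Finset.sum_mul, hx.2, one_mul]

lemma maxPay_nonneg (A : Fin N → Fin N → ℝ) (hA : ∀ i j, A j i = -A i j)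
    {σ : Fin N → ℝ} (hσ : σ ∈ stdSimplex ℝ (Fin N)) : 0 ≤ maxPay A σ := by
  have h0 : ∑ i, σ i * pay A σ i = 0 := by
    have h1 : ∑ i, σ i * pay A σ i = ∑ i, ∑ j, σ i * (A i j * σ j) := by
      simp [pay, Finset.mul_sum]
    have h2 : ∑ i, ∑ j, σ i * (A i j * σ j) = -∑ i, ∑ j, σ i * (A i j * σ j) := by
      conv_lhs => rw [Finset.sum_comm]
      rw [← Finset.sum_neg_distrib]
      refine Finset.sum_congr rfl fun j _ => ?_
      rw [← Finset.sum_neg_distrib]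
      refine Finset.sum_congr rfl fun i _ => ?_
      rw [hA i j]; ring
    linarith [h1, h2]
  calc (0:ℝ) = ∑ i, σ i * pay A σ i := h0.symm
    _ ≤ maxPay A σ := avg_le_maxPay A σ hσ

/-- The point mass at `i0`. -/
noncomputable def delta (i0 : Fin N) : Fin N → ℝ := fun j => if j = i0 then 1 else 0

lemma delta_suppIn {P : Set (Fin N)} {i0 : Fin N} (h : i0 ∈ P) : SuppIn P (delta i0) := by
  refine ⟨⟨fun j => by unfold delta; positivity, by simp [delta]⟩, fun j hj => ?_⟩
  unfold delta
  rw [if_neg]; rintro rfl; exact hj h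

lemma pay_delta (A : Fin N → Fin N → ℝ) (i0 i : Fin N) : pay A (delta i0) i = A i i0 := by
  simp [pay, delta]

/-- The payoff map as a linear map `σ ↦ pay A σ`. -/
noncomputable def payL (A : Fin N → Fin N → ℝ) : (Fin N → ℝ) →ₗ[ℝ] (Fin N → ℝ) where
  toFun σ := pay A σ
  map_add' σ τ := by
    ext i; simp [pay, mul_add, Finset.sum_add_distrib]
  map_smul' c σ := by
    ext i; simp [pay, Finset.mul_sum]; ring_nf
    exact Finset.sum_congr rfl fun j _ => by ring

lemma convex_suppIn (P : Set (Fin N)) : Convex ℝ {σ : Fin N → ℝ | SuppIn P σ} := by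
  intro σ hσ τ hτ a b ha hb hab
  refine ⟨(convex_stdSimplex ℝ (Fin N)) hσ.1 hτ.1 ha hb hab, fun j hj => ?_⟩
  simp [Pi.add_apply, hσ.2 j hj, hτ.2 j hj]

lemma PE_bddBelow (A : Fin N → Fin N → ℝ) (hA : ∀ i j, A j i = -A i j) (P : Set (Fin N)) :
    BddBelow (maxPay A '' {σ | SuppIn P σ}) := by
  refine ⟨0, ?_⟩
  rintro b ⟨τ, hτ, rfl⟩
  exact maxPay_nonneg A hA hτ.1
/-- Minimax-type consequence of the separation theorem: there is a mixture over `Peq`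
whose payoff against every column in `E` is at least `PE A E`. -/
lemma exists_opt_mix (A : Fin N → Fin N → ℝ) (hA : ∀ i j, A j i = -A i j)
    (Peq : Set (Fin N)) (hne : Peq.Nonempty) (r : ℝ)
    (hout : ∀ i ∈ Peq, ∀ ρ ∉ Peq, r ≤ A i ρ)
    (hin : ∀ i ∈ Peq, ∀ j ∈ Peq, |A i j| < r)
    (E : Set (Fin N)) (hE : E.Nonempty) (hEP : E ⊆ Peq) :
    ∃ x : Fin N → ℝ, SuppIn Peq x ∧ ∀ j ∈ E, PE A E ≤ ∑ i, x i * A i j := by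
  obtain ⟨i0, hi0⟩ := hne
  haveI : Nonempty (Fin N) := ⟨i0⟩
  set v := PE A E with hv
  -- every strategy supported in E is exploited by at least `v` by some row of Peq
  have key_ge : ∀ σ, SuppIn E σ → ∃ i ∈ Peq, v ≤ pay A σ i := by
    intro σ hσ
    have hvle : v ≤ maxPay A σ := csInf_le (PE_bddBelow A hA E) ⟨σ, hσ, rfl⟩
    obtain ⟨i', hi'⟩ := Finite.exists_max (pay A σ)
    have hmax : maxPay A σ = pay A σ i' :=
      le_antisymm (ciSup_le hi') (pay_le_maxPay A σ i')
    by_cases hmem : i' ∈ Peq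
    · exact ⟨i', hmem, hmax ▸ hvle⟩
    · refine ⟨i0, hi0, ?_⟩
      have hle : pay A σ i' ≤ pay A σ i0 := by
        refine Finset.sum_le_sum fun j _ => ?_
        by_cases hj : σ j = 0
        · simp [hj]
        · have hjE : j ∈ E := by by_contra h; exact hj (hσ.2 j h)
          have hjP := hEP hjE
          have h1 : -r < A i0 j := neg_lt_of_abs_lt (hin i0 hi0 j hjP)
          have h2 : A i' j ≤ -r := by
            have := hout j hjP i' hmem
            rw [hA j i']
            linarith
          have hσj : 0 ≤ σ j := hσ.1.1 j
          exact mul_le_mul_of_nonneg_right (by linarith) hσj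
      calc v ≤ maxPay A σ := hvle
        _ = pay A σ i' := hmax
        _ ≤ pay A σ i0 := hle
  -- the two convex sets
  set D : Set (Fin N → ℝ) := (payL A) '' {σ | SuppIn E σ} with hD
  set Q : Set (Fin N → ℝ) := {w | ∀ i ∈ Peq, w i < v} with hQ
  have hDconv : Convex ℝ D := (convex_suppIn E).linear_image (payL A)
  have hQconv : Convex ℝ Q := by
    intro w hw w' hw' a b ha hb hab
    intro i hi
    have h1 := hw i hi
    have h2 := hw' i hi
    simp only [Pi.add_apply, Pi.smul_apply, smul_eq_mul]
    rcases eq_or_lt_of_le ha with h | h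
    · have hb1 : b = 1 := by linarith
      rw [← h, hb1]; simpa using h2
    · have e1 : a * w i < a * v := mul_lt_mul_of_pos_left h1 h
      have e2 : b * w' i ≤ b * v := mul_le_mul_of_nonneg_left h2.le hb
      have e3 : a * v + b * v = v := by rw [← add_mul, hab, one_mul]
      linarith
  have hQopen : IsOpen Q := by
    have : Q = ⋂ i ∈ Peq, {w : Fin N → ℝ | w i < v} := by
      ext w; simp [hQ, Set.mem_iInter]
    rw [this]
    exact (Peq.toFinite).isOpen_biInter fun i _ =>
      isOpen_lt (continuous_apply i) continuous_const
  have hdisj : Disjoint Q D := by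
    rw [Set.disjoint_left]
    rintro w hw ⟨σ, hσ, rfl⟩
    obtain ⟨i, hiq, hiv⟩ := key_ge σ hσ
    exact absurd (hw i hiq) (by simp only [payL, LinearMap.coe_mk, AddHom.coe_mk]; linarith)
  obtain ⟨f, u, hfQ, hfD⟩ := geometric_hahn_banach_open hQconv hQopen hDconv hdisj
  set g : Fin N → ℝ := fun i => f (delta i) with hg
  have hdelta : ∀ w : Fin N → ℝ, w = ∑ i, w i • delta i := by
    intro w; ext j
    simp [delta, Finset.sum_apply, mul_ite]
  have hf : ∀ w : Fin N → ℝ, f w = ∑ i, w i * g i := by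
    intro w
    conv_lhs => rw [hdelta w]
    rw [map_sum]
    exact Finset.sum_congr rfl fun i _ => by rw [map_smul, smul_eq_mul]
  set w0 : Fin N → ℝ := fun _ => v - 1 with hw0
  have hw0Q : w0 ∈ Q := fun i _ => by simp [hw0]
  have hfw0 := hfQ w0 hw0Q
  -- coefficients outside Peq vanish
  have hgzero : ∀ i ∉ Peq, g i = 0 := by
    intro i hi
    by_contra hgi
    have hmem : w0 + ((u - f w0) / g i) • delta i ∈ Q := by
      intro k hk
      have hki : k ≠ i := fun h => hi (h ▸ hk)
      simp [hw0, delta, Pi.add_apply, hki]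
    have := hfQ _ hmem
    rw [map_add, map_smul, smul_eq_mul,
      show f (delta i) = g i from rfl, div_mul_cancel₀ _ hgi] at this
    linarith
  -- coefficients are nonnegative
  have hgnn : ∀ i, 0 ≤ g i := by
    intro i
    by_contra hgi
    push_neg at hgi
    have hc : (u - f w0) / g i < 0 := div_neg_of_pos_of_neg (by linarith) hgi
    have hmem : w0 + ((u - f w0) / g i) • delta i ∈ Q := by
      intro k hk
      by_cases hki : k = i
      · subst hki; simp [hw0, delta]; linarith
      · simp [hw0, delta, hki]
    have := hfQ _ hmem
    rw [map_add, map_smul, smul_eq_mul,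
      show f (delta i) = g i from rfl, div_mul_cancel₀ _ (ne_of_lt hgi)] at this
    linarith
  set T : ℝ := ∑ i, g i with hT
  have hTnn : 0 ≤ T := Finset.sum_nonneg fun i _ => hgnn i
  -- D is nonempty
  obtain ⟨j0, hj0⟩ := hE
  have hz0 : (payL A) (delta j0) ∈ D := ⟨delta j0, delta_suppIn hj0, rfl⟩
  have hTpos : 0 < T := by
    rcases lt_or_eq_of_le hTnn with h | h
    · exact h
    · exfalso
      have hall : ∀ i, g i = 0 := by
        intro i
        have := (Finset.sum_eq_zero_iff_of_nonneg (fun i _ => hgnn i)).mp h.symm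
        exact this i (Finset.mem_univ i)
      have hf0 : ∀ w : Fin N → ℝ, f w = 0 := by
        intro w; rw [hf]; simp [hall]
      have h1 : f w0 < u := hfw0
      have h2 : u ≤ f ((payL A) (delta j0)) := hfD _ hz0
      rw [hf0] at h1
      rw [hf0] at h2
      linarith
  have hvT : v * T ≤ u := by
    by_contra hcon
    push_neg at hcon
    set ε : ℝ := (v * T - u) / (T + 1) with hε
    have hT1 : (0:ℝ) < T + 1 := by linarith
    have hεpos : 0 < ε := div_pos (by linarith) hT1
    have hmem : (fun _ => v - ε : Fin N → ℝ) ∈ Q := fun i _ => by simp; linarith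
    have hlt := hfQ _ hmem
    rw [hf] at hlt
    have heq : ∑ i, (v - ε) * g i = (v - ε) * T := by rw [← Finset.mul_sum]
    rw [heq] at hlt
    have hεT : ε * (T + 1) = v * T - u := div_mul_cancel₀ _ (ne_of_gt hT1)
    nlinarith
  refine ⟨fun i => g i / T, ⟨⟨fun i => div_nonneg (hgnn i) hTnn, ?_⟩, fun i hi => by
    show g i / T = 0
    rw [hgzero i hi, zero_div]⟩, ?_⟩
  · rw [← Finset.sum_div, ← hT, div_self (ne_of_gt hTpos)]
  · intro j hj
    have hzj : (payL A) (delta j) ∈ D := ⟨delta j, delta_suppIn hj, rfl⟩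
    have h1 : u ≤ f ((payL A) (delta j)) := hfD _ hzj
    rw [hf] at h1
    have h2 : ∀ i, ((payL A) (delta j)) i = A i j := by
      intro i
      show pay A (delta j) i = A i j
      exact pay_delta A j i
    have h3 : ∑ i, ((payL A) (delta j)) i * g i = ∑ i, A i j * g i :=
      Finset.sum_congr rfl fun i _ => by rw [h2]
    rw [h3] at h1
    have h4 : ∑ i, (g i / T) * A i j = (∑ i, A i j * g i) / T := by
      rw [Finset.sum_div]
      exact Finset.sum_congr rfl fun i _ => by ring
    rw [h4]
    rw [le_div_iff₀ hTpos]
    linarith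
/-- Lower bound on the max payoff of any strategy supported in a set whose
intersection with `Peq` is contained in `E`. -/
lemma maxPay_lower (A : Fin N → Fin N → ℝ) (hA : ∀ i j, A j i = -A i j)
    (Peq : Set (Fin N)) (hne : Peq.Nonempty) (r : ℝ) (hr : 0 < r)
    (hout : ∀ i ∈ Peq, ∀ ρ ∉ Peq, r ≤ A i ρ)
    (hin : ∀ i ∈ Peq, ∀ j ∈ Peq, |A i j| < r)
    (E : Set (Fin N)) (hE : E.Nonempty) (hEP : E ⊆ Peq)
    (P' : Set (Fin N)) (hP' : ∀ j ∈ P', j ∈ Peq → j ∈ E) :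
    ∀ σ, SuppIn P' σ → PE A E ≤ maxPay A σ := by
  obtain ⟨i0, hi0⟩ := hne
  haveI : Nonempty (Fin N) := ⟨i0⟩
  obtain ⟨x, hxsupp, hxE⟩ := exists_opt_mix A hA Peq ⟨i0, hi0⟩ r hout hin E hE hEP
  -- PE A E ≤ r
  have hvr : PE A E ≤ r := by
    obtain ⟨j0, hj0⟩ := hE
    have h1 : PE A E ≤ maxPay A (delta j0) :=
      csInf_le (PE_bddBelow A hA E) ⟨delta j0, delta_suppIn hj0, rfl⟩
    have h2 : maxPay A (delta j0) ≤ r := by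
      apply ciSup_le
      intro i
      rw [pay_delta]
      by_cases hi : i ∈ Peq
      · exact le_of_lt (lt_of_le_of_lt (le_abs_self _) (hin i hi j0 (hEP hj0)))
      · have h3 := hout j0 (hEP hj0) i hi
        rw [hA j0 i]
        linarith
    linarith
  intro σ hσ
  have havg : ∑ i, x i * pay A σ i ≤ maxPay A σ := avg_le_maxPay A σ hxsupp.1
  have hswap : ∑ i, x i * pay A σ i = ∑ j, (∑ i, x i * A i j) * σ j := by
    simp only [pay, Finset.mul_sum]
    rw [Finset.sum_comm]
    refine Finset.sum_congr rfl fun j _ => ?_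
    rw [Finset.sum_mul]
    exact Finset.sum_congr rfl fun i _ => by ring
  have hterm : ∑ j, PE A E * σ j ≤ ∑ j, (∑ i, x i * A i j) * σ j := by
    refine Finset.sum_le_sum fun j _ => ?_
    by_cases hj : σ j = 0
    · simp [hj]
    · have hjP' : j ∈ P' := by by_contra h; exact hj (hσ.2 j h)
      have hσj : 0 ≤ σ j := hσ.1.1 j
      refine mul_le_mul_of_nonneg_right ?_ hσj
      by_cases hjq : j ∈ Peq
      · exact hxE j (hP' j hjP' hjq)
      · have hge : r ≤ ∑ i, x i * A i j := by
          calc r = ∑ i, x i * r := by rw [← Finset.sum_mul, hxsupp.1.2, one_mul]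
            _ ≤ ∑ i, x i * A i j := by
                refine Finset.sum_le_sum fun i _ => ?_
                by_cases hi : i ∈ Peq
                · exact mul_le_mul_of_nonneg_left (hout i hi j hjq) (hxsupp.1.1 i)
                · rw [hxsupp.2 i hi]; simp
        linarith
  have hone : ∑ j, PE A E * σ j = PE A E := by
    rw [← Finset.mul_sum, hσ.1.2, mul_one]
  linarith [hone ▸ hterm, hswap ▸ havg]
end Helpers

/-- under the `Π_eq`/`Π_out` structure with margin `r` and
nondegeneracy (each subgame rows `E ⊆ Π_eq` vs. columns `Π_eq` has a unique optimal
pair), adding an outside strategy to a population meeting `Π_eq` leaves PE unchanged. -/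
theorem stmt5 {N : ℕ} (A : Fin N → Fin N → ℝ) (hA : ∀ i j, A j i = -A i j)
    (Peq : Set (Fin N)) (hne : Peq.Nonempty) (r : ℝ) (hr : 0 < r)
    (hout : ∀ i ∈ Peq, ∀ ρ ∉ Peq, r ≤ A i ρ)
    (hin : ∀ i ∈ Peq, ∀ j ∈ Peq, |A i j| < r)
    (hnd : ∀ E : Set (Fin N), E.Nonempty → E ⊆ Peq →
      ∃! p : (Fin N → ℝ) × (Fin N → ℝ), OptimalPair A E Peq p.1 p.2)
    (P : Set (Fin N)) (hP : P.Nonempty) (hPeq : (P ∩ Peq).Nonempty) :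
    ∀ ρ, ρ ∉ Peq → PE A (P ∪ {ρ}) = PE A P := by
  intro ρ hρ
  obtain ⟨i0, hi0P, hi0q⟩ := hPeq
  set E : Set (Fin N) := P ∩ Peq with hEdef
  have hE : E.Nonempty := ⟨i0, hi0P, hi0q⟩
  have hEP : E ⊆ Peq := Set.inter_subset_right
  -- monotonicity of PE under set inclusion
  have hmono : ∀ P₁ P₂ : Set (Fin N), P₁ ⊆ P₂ → (∃ k, k ∈ P₁) → PE A P₂ ≤ PE A P₁ := by
    rintro P₁ P₂ hsub ⟨k, hk⟩
    refine csInf_le_csInf (PE_bddBelow A hA P₂) ⟨maxPay A (delta k), delta k, delta_suppIn hk, rfl⟩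
      (Set.image_mono ?_)
    intro σ hσ
    exact ⟨hσ.1, fun j hj => hσ.2 j fun hjP => hj (hsub hjP)⟩
  have h1 : PE A (P ∪ {ρ}) ≤ PE A P := hmono P (P ∪ {ρ}) Set.subset_union_left ⟨i0, hi0P⟩
  have h2 : PE A P ≤ PE A E := hmono E P Set.inter_subset_left ⟨i0, hi0P, hi0q⟩
  have h3 : PE A E ≤ PE A (P ∪ {ρ}) := by
    have hlow := maxPay_lower A hA Peq hne r hr hout hin E hE hEP (P ∪ {ρ}) ?_
    · refine le_csInf ⟨maxPay A (delta i0), delta i0, delta_suppIn (Or.inl hi0P), rfl⟩ ?_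
      rintro b ⟨σ, hσ, rfl⟩
      exact hlow σ hσ
    · rintro j (hjP | hjρ) hjq
      · exact ⟨hjP, hjq⟩
      · exact absurd hjq (by rw [Set.mem_singleton_iff] at hjρ; rw [hjρ]; exact hρ)
  linarith
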